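/- arXiv:2411.07707 — 2 statements merged into one kernel-verified Lean document; each statement's English description precedes it below -/
import Mathlib

section
/- Let V = ⊕_{n∈ℕ} V(n) be a vertex operator algebra with Virasoro operators L(n), and let ρ : T → G be a holomorphic family of transformations with ρ_0(z) = z, defining operators U(ρ_ζ) = ρ_ζ'(0)^{L(0)} exp(Σ_{k≥1} c_k(ζ) L(k)) on each V^{≤n}. Then for every v ∈ V^{≤n}: ∂_ζ U(ρ_ζ) v |_{ζ=0} = − ∂_ζ U(ρ_ζ^{-1}) v |_{ζ=0} = Σ_{k≥1} (1/k!) (∂_ζ ρ_ζ^{(k)}(0)|_{ζ=0}) L(k−1) v, where ρ_ζ^{(k)}(z) = ∂_z^k ρ_ζ(z) and the sum is finite on V^{≤n}. -/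
/-!
STATEMENT 4: Let `V = ⊕_{n∈ℕ} V(n)` be a vertex operator algebra with Virasoro operators
`L(n)`, and let `ρ : T → 𝔾` be a holomorphic family of transformations with `ρ_0(z) = z`,
defining operators `U(ρ_ζ) = ρ_ζ'(0)^{L(0)} exp(Σ_{k≥1} c_k(ζ) L(k))` on each `V^{≤n}`.
Then for every `v ∈ V^{≤n}`:
`∂_ζ U(ρ_ζ) v |_{ζ=0} = − ∂_ζ U(ρ_ζ^{-1}) v |_{ζ=0}
   = Σ_{k≥1} (1/k!) (∂_ζ ρ_ζ^{(k)}(0)|_{ζ=0}) L(k−1) v`,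
where `ρ_ζ^{(k)}(z) = ∂_z^k ρ_ζ(z)` and the sum is finite on `V^{≤n}`.

Encoding: the `ℕ`-grading of `V` is given by commuting projections `P m` onto `V(m)` with
pointwise finite supports summing to the identity; `L k` lowers the degree by `k` and `L 0`
acts on `V(m)` as `m`; `v ∈ V^{≤n}` means `P m v = 0` for `m > n`.  For `a ≠ 0` and scalars
`c_k`, `U = a^{L(0)} ∘ exp(Σ_{k≥1} c_k L(k))` is realized by `aPow` and `expD` below (all
sums are finite on `V^{≤n}`, and are recorded as `finsum`s).  The families `ρ_ζ` and
`ρ_ζ^{-1}` are formal power series families, inverse to each other under composition, each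
written in the exponential form `a_1(ζ) · exp(Σ_k c_k(ζ) z^{k+1}∂_z) z`.  The `ζ`-derivative
of the `V`-valued function is expressed through an arbitrary linear functional `φ`, and
`(1/k!) ρ_ζ^{(k)}(0) = coeff_k (ρ_ζ)`.
-/

open PowerSeries

/-- The vector field coefficient series `Σ_{k ≥ 1} c_k z^{k+1}`. -/
noncomputable def vecField (c : ℕ → ℂ) : PowerSeries ℂ :=
  PowerSeries.mk fun n => if 2 ≤ n then c (n - 1) else 0

/-- The derivation `f ↦ (Σ_{k≥1} c_k z^{k+1}) ⬝ ∂_z f`. -/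
noncomputable def liftD (c : ℕ → ℂ) (f : PowerSeries ℂ) : PowerSeries ℂ :=
  vecField c * PowerSeries.derivativeFun f

/-- The formal flow `exp(Σ_{k≥1} c_k z^{k+1} ∂_z) z`. -/
noncomputable def expFlow (c : ℕ → ℂ) : PowerSeries ℂ :=
  PowerSeries.mk fun n =>
    ∑ m ∈ Finset.range (n + 1), (m.factorial : ℂ)⁻¹ * coeff n ((liftD c)^[m] PowerSeries.X)

/-- Composition `f ∘ g` of formal power series (`g` with zero constant term). -/
noncomputable def pcomp (f g : PowerSeries ℂ) : PowerSeries ℂ :=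
  PowerSeries.mk fun n => ∑ m ∈ Finset.range (n + 1), coeff m f * coeff n (g ^ m)

section
variable {V : Type*} [AddCommGroup V] [Module ℂ V]

/-- `Σ_{k ≥ 1} c_k L(k)`, as an operator on `V` (a finite sum on each `V^{≤n}`). -/
noncomputable def Dop (L : ℕ → V →ₗ[ℂ] V) (c : ℕ → ℂ) (v : V) : V :=
  ∑ᶠ k : ℕ, c (k + 1) • L (k + 1) v

/-- `exp(Σ_{k ≥ 1} c_k L(k))`, acting on `V` (a finite sum on each `V^{≤n}`). -/
noncomputable def expD (L : ℕ → V →ₗ[ℂ] V) (c : ℕ → ℂ) (v : V) : V :=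
  ∑ᶠ m : ℕ, (m.factorial : ℂ)⁻¹ • (Dop L c)^[m] v

/-- `a^{L(0)}`, acting as `a^m` on `V(m)`. -/
noncomputable def aPow (P : ℕ → V →ₗ[ℂ] V) (a : ℂ) (v : V) : V :=
  ∑ᶠ m : ℕ, a ^ m • P m v

/-- The change-of-coordinate operator `U(α) = α'(0)^{L(0)} ∘ exp(Σ_{k≥1} c_k L(k))`. -/
noncomputable def Uop (L P : ℕ → V →ₗ[ℂ] V) (a : ℂ) (c : ℕ → ℂ) (v : V) : V :=
  aPow P a (expD L c v)


/-! ### Auxiliary lemmas: power series side -/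

lemma coeff_vecField (c : ℕ → ℂ) (n : ℕ) :
    coeff n (vecField c) = if 2 ≤ n then c (n - 1) else 0 := coeff_mk _ _

lemma coeff_liftD (c : ℕ → ℂ) (f : PowerSeries ℂ) (n : ℕ) :
    coeff n (liftD c f) = ∑ p ∈ Finset.HasAntidiagonal.antidiagonal n,
      (if 2 ≤ p.1 then c (p.1 - 1) else 0) * (coeff (p.2 + 1) f * ((p.2 : ℂ) + 1)) := by
  rw [liftD, coeff_mul]
  refine Finset.sum_congr rfl fun p _ => ?_
  rw [coeff_vecField]
  exact congrArg _ (coeff_derivative f p.2)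

lemma vecField_zero_fam {c : ℕ → ℂ} (hc : ∀ k, c k = 0) : vecField c = 0 := by
  ext n
  rw [coeff_vecField]
  split_ifs <;> simp [hc]

lemma liftD_zero_fam {c : ℕ → ℂ} (hc : ∀ k, c k = 0) (f : PowerSeries ℂ) :
    liftD c f = 0 := by
  rw [liftD, vecField_zero_fam hc, zero_mul]

lemma iter_liftD_zero_fam {c : ℕ → ℂ} (hc : ∀ k, c k = 0) (m : ℕ) (f : PowerSeries ℂ) :
    (liftD c)^[m + 1] f = 0 := by
  rw [Function.iterate_succ_apply', liftD_zero_fam hc]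

lemma coeff_expFlow (c : ℕ → ℂ) (n : ℕ) :
    coeff n (expFlow c) = ∑ m ∈ Finset.range (n + 1),
      (m.factorial : ℂ)⁻¹ * coeff n ((liftD c)^[m] PowerSeries.X) := coeff_mk _ _

lemma expFlow_zero_fam {c : ℕ → ℂ} (hc : ∀ k, c k = 0) : expFlow c = PowerSeries.X := by
  ext n
  rw [coeff_expFlow, Finset.sum_eq_single 0]
  · simp
  · intro m hm hne
    obtain ⟨t, rfl⟩ := Nat.exists_eq_succ_of_ne_zero hne
    rw [iter_liftD_zero_fam hc]
    simp
  · simp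

lemma hasDerivAt_ite_c {c : ℕ → ℂ → ℂ} (hcd : ∀ k, DifferentiableAt ℂ (c k) 0) (i : ℕ) :
    HasDerivAt (fun ζ => if 2 ≤ i then c (i - 1) ζ else 0)
      (if 2 ≤ i then deriv (c (i - 1)) 0 else 0) 0 := by
  by_cases h : 2 ≤ i
  · simp only [if_pos h]
    exact (hcd (i - 1)).hasDerivAt
  · simp only [if_neg h]
    exact hasDerivAt_const _ _

lemma hasDerivAt_W {c : ℕ → ℂ → ℂ} (hcd : ∀ k, DifferentiableAt ℂ (c k) 0)
    (hc0 : ∀ k, c k 0 = 0) :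
    ∀ (m n' : ℕ),
      HasDerivAt (fun ζ => coeff n' ((liftD (fun k => c k ζ))^[m] PowerSeries.X))
        (if m = 1 ∧ 2 ≤ n' then deriv (c (n' - 1)) 0 else 0) 0 := by
  intro m
  induction m with
  | zero =>
    intro n'
    rw [if_neg (by simp)]
    simp only [Function.iterate_zero, id_eq]
    exact hasDerivAt_const _ _
  | succ m ih =>
    intro n'
    have hfun : (fun ζ => coeff n' ((liftD (fun k => c k ζ))^[m + 1] PowerSeries.X))
        = fun ζ => ∑ p ∈ Finset.HasAntidiagonal.antidiagonal n',
            (if 2 ≤ p.1 then c (p.1 - 1) ζ else 0) *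
              (coeff (p.2 + 1) ((liftD (fun k => c k ζ))^[m] PowerSeries.X) * ((p.2 : ℂ) + 1)) := by
      funext ζ
      rw [Function.iterate_succ_apply', coeff_liftD]
    rw [hfun]
    have h := HasDerivAt.fun_sum (u := Finset.HasAntidiagonal.antidiagonal n') (x := (0:ℂ)) (fun p _ =>
      (hasDerivAt_ite_c hcd p.1).mul ((ih (p.2 + 1)).mul_const ((p.2 : ℂ) + 1)))
    have hc0' : ∀ i : ℕ, (if 2 ≤ i then c (i - 1) 0 else 0) = 0 := by
      intro i; split_ifs <;> simp [hc0]
    rcases m with _ | t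
    · -- m = 0 : the first-order term
      have hval : ∑ p ∈ Finset.HasAntidiagonal.antidiagonal n',
          ((if 2 ≤ p.1 then deriv (c (p.1 - 1)) 0 else 0) *
              (coeff (p.2 + 1) ((liftD (fun k => c k 0))^[0] PowerSeries.X) * ((p.2 : ℂ) + 1))
            + (if 2 ≤ p.1 then c (p.1 - 1) 0 else 0) *
              ((if 0 = 1 ∧ 2 ≤ p.2 + 1 then deriv (c (p.2 + 1 - 1)) 0 else 0) * ((p.2 : ℂ) + 1)))
          = if 0 + 1 = 1 ∧ 2 ≤ n' then deriv (c (n' - 1)) 0 else 0 := by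
        rw [Finset.sum_eq_single (n', 0)]
        · simp [PowerSeries.coeff_X, hc0']
        · intro p hp hne
          have hp2 : p.2 ≠ 0 := by
            intro h2
            apply hne
            have := Finset.HasAntidiagonal.mem_antidiagonal.mp hp
            ext <;> omega
          simp [PowerSeries.coeff_X, hc0', hp2]
        · intro hmem
          exact absurd (Finset.HasAntidiagonal.mem_antidiagonal.mpr (by omega)) hmem
      rw [hval] at h
      exact h
    · -- m = t + 1 ≥ 1 : all terms vanish
      have hz : ∀ j : ℕ, coeff j ((liftD (fun k => c k 0))^[t + 1] PowerSeries.X) = 0 := by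
        intro j
        rw [iter_liftD_zero_fam (fun k => hc0 k), map_zero]
      rw [if_neg (by omega)]
      have hval : ∑ p ∈ Finset.HasAntidiagonal.antidiagonal n',
          ((if 2 ≤ p.1 then deriv (c (p.1 - 1)) 0 else 0) *
              (coeff (p.2 + 1) ((liftD (fun k => c k 0))^[t + 1] PowerSeries.X) * ((p.2 : ℂ) + 1))
            + (if 2 ≤ p.1 then c (p.1 - 1) 0 else 0) *
              ((if t + 1 = 1 ∧ 2 ≤ p.2 + 1 then deriv (c (p.2 + 1 - 1)) 0 else 0) * ((p.2 : ℂ) + 1)))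
          = 0 := by
        refine Finset.sum_eq_zero fun p _ => ?_
        rw [hz, hc0', zero_mul, zero_mul, mul_zero, add_zero]
      rw [hval] at h
      exact h

lemma hasDerivAt_E {c : ℕ → ℂ → ℂ} (hcd : ∀ k, DifferentiableAt ℂ (c k) 0)
    (hc0 : ∀ k, c k 0 = 0) (n' : ℕ) :
    HasDerivAt (fun ζ => coeff n' (expFlow (fun k => c k ζ)))
      (if 2 ≤ n' then deriv (c (n' - 1)) 0 else 0) 0 := by
  have hfun : (fun ζ => coeff n' (expFlow (fun k => c k ζ)))
      = fun ζ => ∑ m ∈ Finset.range (n' + 1),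
          (m.factorial : ℂ)⁻¹ * coeff n' ((liftD (fun k => c k ζ))^[m] PowerSeries.X) := by
    funext ζ; exact coeff_expFlow _ _
  rw [hfun]
  have h := HasDerivAt.fun_sum (u := Finset.range (n' + 1)) (x := (0:ℂ)) (fun m _ =>
    (hasDerivAt_W hcd hc0 m n').const_mul ((m.factorial : ℂ)⁻¹))
  have hval : ∑ m ∈ Finset.range (n' + 1),
      (m.factorial : ℂ)⁻¹ * (if m = 1 ∧ 2 ≤ n' then deriv (c (n' - 1)) 0 else 0)
      = if 2 ≤ n' then deriv (c (n' - 1)) 0 else 0 := by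
    by_cases hn : 2 ≤ n'
    · simp only [hn, and_true, if_pos]
      have hcong : ∀ m ∈ Finset.range (n' + 1),
          (m.factorial : ℂ)⁻¹ * (if m = 1 then deriv (c (n' - 1)) 0 else 0)
            = if m = 1 then deriv (c (n' - 1)) 0 else 0 := by
        intro m _
        split_ifs with h1
        · subst h1; simp [Nat.factorial]
        · simp
      rw [Finset.sum_congr rfl hcong, Finset.sum_ite_eq' (Finset.range (n' + 1)) 1]
      rw [if_pos (Finset.mem_range.mpr (by omega))]
    · simp [hn]
  rw [← hval]
  exact h

lemma hasDerivAt_coeff_fam {T : Set ℂ} (hT : IsOpen T) (h0T : (0 : ℂ) ∈ T)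
    {ρf : ℂ → PowerSeries ℂ} {c : ℕ → ℂ → ℂ}
    (hcd : ∀ k, DifferentiableAt ℂ (c k) 0) (hc0 : ∀ k, c k 0 = 0)
    {a : ℂ → ℂ} (had : DifferentiableAt ℂ a 0) (ha0 : a 0 = 1)
    (hdec : ∀ ζ ∈ T, ρf ζ = PowerSeries.C (a ζ) * expFlow (fun k => c k ζ)) (n' : ℕ) :
    HasDerivAt (fun ζ => coeff n' (ρf ζ))
      (deriv a 0 * coeff n' (PowerSeries.X : PowerSeries ℂ)
        + (if 2 ≤ n' then deriv (c (n' - 1)) 0 else 0)) 0 := by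
  have h := (had.hasDerivAt).fun_mul (hasDerivAt_E hcd hc0 n')
  have hE0 : coeff n' (expFlow (fun k => c k 0)) = coeff n' (PowerSeries.X : PowerSeries ℂ) := by
    rw [expFlow_zero_fam (fun k => hc0 k)]
  rw [hE0, ha0, one_mul] at h
  apply h.congr_of_eventuallyEq
  filter_upwards [hT.mem_nhds h0T] with ζ hζ
  rw [hdec ζ hζ, PowerSeries.coeff_C_mul]

lemma pcomp_X_right (f : PowerSeries ℂ) : pcomp f PowerSeries.X = f := by
  ext n
  rw [pcomp, coeff_mk]
  have : ∀ m ∈ Finset.range (n + 1),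
      coeff m f * coeff n ((PowerSeries.X : PowerSeries ℂ) ^ m)
        = if n = m then coeff m f else 0 := by
    intro m _
    rw [PowerSeries.coeff_X_pow]
    split_ifs <;> simp
  rw [Finset.sum_congr rfl this, Finset.sum_ite_eq (Finset.range (n + 1)) n,
    if_pos (Finset.mem_range.mpr (by omega))]

/-! ### Auxiliary lemmas: the `V` side -/

section AuxV
variable {W : Type*} [AddCommGroup W] [Module ℂ W]
variable {L P : ℕ → W →ₗ[ℂ] W}

/-- `v ∈ V^{≤ n}`. -/
def degLE (P : ℕ → W →ₗ[ℂ] W) (n : ℕ) (v : W) : Prop := ∀ m, n < m → P m v = 0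

lemma degLE_mono {n n' : ℕ} (h : n ≤ n') {v : W} (hv : degLE P n v) : degLE P n' v :=
  fun m hm => hv m (lt_of_le_of_lt h hm)

lemma L_eq_zero (hPsum : ∀ v : W, ∑ᶠ m, P m v = v)
    (hLP : ∀ (k m : ℕ) (v : W), P m (L k v) = L k (P (m + k) v))
    {n : ℕ} {v : W} (hv : degLE P n v) {j : ℕ} (hj : n < j) : L j v = 0 := by
  rw [← hPsum (L j v)]
  apply finsum_eq_zero_of_forall_eq_zero
  intro m
  rw [hLP, hv _ (by omega), map_zero]

lemma degLE_L (hLP : ∀ (k m : ℕ) (v : W), P m (L k v) = L k (P (m + k) v))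
    {n : ℕ} {v : W} (hv : degLE P n v) {j : ℕ} (hj : 1 ≤ j) : degLE P (n - 1) (L j v) := by
  intro m hm
  rw [hLP, hv _ (by omega), map_zero]

lemma Dop_eq_sum (hPsum : ∀ v : W, ∑ᶠ m, P m v = v)
    (hLP : ∀ (k m : ℕ) (v : W), P m (L k v) = L k (P (m + k) v))
    {n : ℕ} {v : W} (hv : degLE P n v) (c : ℕ → ℂ) :
    Dop L c v = ∑ k ∈ Finset.range n, c (k + 1) • L (k + 1) v := by
  apply finsum_eq_sum_of_support_subset
  intro k hk
  simp only [Function.mem_support, ne_eq] at hk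
  simp only [Finset.coe_range, Set.mem_Iio]
  by_contra h
  push_neg at h
  exact hk (by rw [L_eq_zero hPsum hLP hv (by omega), smul_zero])

lemma degLE_Dop (hPsum : ∀ v : W, ∑ᶠ m, P m v = v)
    (hLP : ∀ (k m : ℕ) (v : W), P m (L k v) = L k (P (m + k) v))
    {n : ℕ} {v : W} (hv : degLE P n v) (c : ℕ → ℂ) : degLE P (n - 1) (Dop L c v) := by
  intro m hm
  rw [Dop_eq_sum hPsum hLP hv, map_sum]
  refine Finset.sum_eq_zero fun k _ => ?_
  rw [map_smul, degLE_L hLP hv (Nat.succ_le_succ (Nat.zero_le k)) m hm, smul_zero]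

lemma degLE_Dop_iter (hPsum : ∀ v : W, ∑ᶠ m, P m v = v)
    (hLP : ∀ (k m : ℕ) (v : W), P m (L k v) = L k (P (m + k) v))
    {n : ℕ} {v : W} (hv : degLE P n v) (c : ℕ → ℂ) (j : ℕ) :
    degLE P (n - j) ((Dop L c)^[j] v) := by
  induction j with
  | zero => simpa using hv
  | succ j ih =>
    rw [Function.iterate_succ_apply']
    have := degLE_Dop hPsum hLP ih c
    rwa [Nat.sub_sub] at this

lemma Dop_apply_zero (c : ℕ → ℂ) : Dop L c (0 : W) = 0 := by
  simp [Dop]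

lemma Dop_iter_apply_zero (c : ℕ → ℂ) (j : ℕ) : (Dop L c)^[j] (0 : W) = 0 := by
  induction j with
  | zero => rfl
  | succ j ih => rw [Function.iterate_succ_apply', ih, Dop_apply_zero]

lemma Dop_iter_eq_zero (hPsum : ∀ v : W, ∑ᶠ m, P m v = v)
    (hLP : ∀ (k m : ℕ) (v : W), P m (L k v) = L k (P (m + k) v))
    {n : ℕ} {v : W} (hv : degLE P n v) (c : ℕ → ℂ) {j : ℕ} (hj : n < j) :
    (Dop L c)^[j] v = 0 := by
  have key : ∀ (n : ℕ) (v : W), degLE P n v → (Dop L c)^[n + 1] v = 0 := by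
    intro n
    induction n with
    | zero =>
      intro v hv
      rw [Function.iterate_one, Dop_eq_sum hPsum hLP hv]
      simp
    | succ n ih =>
      intro v hv
      rw [Function.iterate_succ_apply]
      exact ih _ (by simpa using degLE_Dop hPsum hLP hv c)
  obtain ⟨t, rfl⟩ : ∃ t, j = t + (n + 1) := ⟨j - (n + 1), by omega⟩
  rw [Function.iterate_add_apply, key n v hv, Dop_iter_apply_zero]

lemma expD_eq_sum (hPsum : ∀ v : W, ∑ᶠ m, P m v = v)
    (hLP : ∀ (k m : ℕ) (v : W), P m (L k v) = L k (P (m + k) v))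
    {n : ℕ} {v : W} (hv : degLE P n v) (c : ℕ → ℂ) :
    expD L c v = ∑ j ∈ Finset.range (n + 1), (j.factorial : ℂ)⁻¹ • (Dop L c)^[j] v := by
  apply finsum_eq_sum_of_support_subset
  intro j hj
  simp only [Function.mem_support, ne_eq] at hj
  simp only [Finset.coe_range, Set.mem_Iio]
  by_contra h
  push_neg at h
  exact hj (by rw [Dop_iter_eq_zero hPsum hLP hv c (by omega), smul_zero])

lemma degLE_expD (hPsum : ∀ v : W, ∑ᶠ m, P m v = v)
    (hLP : ∀ (k m : ℕ) (v : W), P m (L k v) = L k (P (m + k) v))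
    {n : ℕ} {v : W} (hv : degLE P n v) (c : ℕ → ℂ) : degLE P n (expD L c v) := by
  intro m hm
  rw [expD_eq_sum hPsum hLP hv, map_sum]
  refine Finset.sum_eq_zero fun j _ => ?_
  rw [map_smul, degLE_mono (Nat.sub_le n j) (degLE_Dop_iter hPsum hLP hv c j) m hm, smul_zero]

lemma sum_P_eq (hPsum : ∀ v : W, ∑ᶠ m, P m v = v)
    {n : ℕ} {v : W} (hv : degLE P n v) :
    ∑ m ∈ Finset.range (n + 1), P m v = v := by
  conv_rhs => rw [← hPsum v]
  symm
  apply finsum_eq_sum_of_support_subset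
  intro m hm
  simp only [Function.mem_support, ne_eq] at hm
  simp only [Finset.coe_range, Set.mem_Iio]
  by_contra h
  push_neg at h
  exact hm (hv m (by omega))

lemma aPow_eq_sum {n : ℕ} {v : W} (hv : degLE P n v) (a : ℂ) :
    aPow P a v = ∑ m ∈ Finset.range (n + 1), a ^ m • P m v := by
  apply finsum_eq_sum_of_support_subset
  intro m hm
  simp only [Function.mem_support, ne_eq] at hm
  simp only [Finset.coe_range, Set.mem_Iio]
  by_contra h
  push_neg at h
  exact hm (by rw [hv m (by omega), smul_zero])

lemma L0_eq_sum (hPsum : ∀ v : W, ∑ᶠ m, P m v = v)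
    (hL0 : ∀ (m : ℕ) (v : W), L 0 (P m v) = (m : ℂ) • P m v)
    {n : ℕ} {v : W} (hv : degLE P n v) :
    L 0 v = ∑ m ∈ Finset.range (n + 1), (m : ℂ) • P m v := by
  conv_lhs => rw [← sum_P_eq hPsum hv]
  rw [map_sum]
  exact Finset.sum_congr rfl fun m _ => hL0 m v

lemma Dop_zero_fam {c : ℕ → ℂ} (hc : ∀ k, c k = 0) (w : W) : Dop L c w = 0 := by
  simp [Dop, hc]

lemma Dop_iter_zero_fam {c : ℕ → ℂ} (hc : ∀ k, c k = 0) (j : ℕ) (w : W) :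
    (Dop L c)^[j + 1] w = 0 := by
  rw [Function.iterate_succ_apply', Dop_zero_fam hc]

lemma expD_zero_fam (hPsum : ∀ v : W, ∑ᶠ m, P m v = v)
    (hLP : ∀ (k m : ℕ) (v : W), P m (L k v) = L k (P (m + k) v))
    {n : ℕ} {v : W} (hv : degLE P n v) {c : ℕ → ℂ} (hc : ∀ k, c k = 0) :
    expD L c v = v := by
  rw [expD_eq_sum hPsum hLP hv, Finset.sum_eq_single 0]
  · simp
  · intro j hj hne
    obtain ⟨t, rfl⟩ := Nat.exists_eq_succ_of_ne_zero hne
    rw [Dop_iter_zero_fam hc, smul_zero]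
  · simp

end AuxV

section AuxDeriv
variable {W : Type*} [AddCommGroup W] [Module ℂ W]
variable {L P : ℕ → W →ₗ[ℂ] W}

lemma hasDerivAt_iter (hPsum : ∀ v : W, ∑ᶠ m, P m v = v)
    (hLP : ∀ (k m : ℕ) (v : W), P m (L k v) = L k (P (m + k) v))
    {c : ℕ → ℂ → ℂ} (hcd : ∀ k, DifferentiableAt ℂ (c k) 0) (hc0 : ∀ k, c k 0 = 0)
    {n : ℕ} {v : W} (hv : degLE P n v) :
    ∀ (j : ℕ) (φ : W →ₗ[ℂ] ℂ),
      HasDerivAt (fun ζ => φ ((Dop L (fun k => c k ζ))^[j] v))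
        (if j = 1 then ∑ k ∈ Finset.range n, deriv (c (k + 1)) 0 * φ (L (k + 1) v) else 0) 0 := by
  intro j
  induction j with
  | zero =>
    intro φ
    rw [if_neg (by omega)]
    simp only [Function.iterate_zero, id_eq]
    exact hasDerivAt_const _ _
  | succ j ih =>
    intro φ
    have hfun : (fun ζ => φ ((Dop L (fun k => c k ζ))^[j + 1] v))
        = fun ζ => ∑ k ∈ Finset.range n,
            c (k + 1) ζ * (φ.comp (L (k + 1))) ((Dop L (fun k => c k ζ))^[j] v) := by
      funext ζ
      rw [Function.iterate_succ_apply',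
        Dop_eq_sum hPsum hLP
          (degLE_mono (Nat.sub_le n j) (degLE_Dop_iter hPsum hLP hv _ j)) _, map_sum]
      simp [smul_eq_mul]
    rw [hfun]
    have h := HasDerivAt.fun_sum (u := Finset.range n) (x := (0:ℂ)) (fun k _ =>
      ((hcd (k + 1)).hasDerivAt).mul (ih (φ.comp (L (k + 1)))))
    rcases Nat.eq_zero_or_pos j with rfl | hj
    · rw [if_pos rfl]
      have hval : ∑ k ∈ Finset.range n,
          (deriv (c (k + 1)) 0 * (φ.comp (L (k + 1))) ((Dop L (fun k => c k 0))^[0] v)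
            + c (k + 1) 0 *
              (if (0:ℕ) = 1 then
                ∑ k' ∈ Finset.range n,
                  deriv (c (k' + 1)) 0 * (φ.comp (L (k + 1))) (L (k' + 1) v)
               else 0))
          = ∑ k ∈ Finset.range n, deriv (c (k + 1)) 0 * φ (L (k + 1) v) := by
        refine Finset.sum_congr rfl fun k _ => ?_
        rw [if_neg (by omega), mul_zero, add_zero]
        simp
      rw [hval] at h
      exact h
    · obtain ⟨t, rfl⟩ := Nat.exists_eq_succ_of_ne_zero (by omega : j ≠ 0)
      rw [if_neg (by omega)]
      have hz : (Dop L (fun k => c k 0))^[t + 1] v = 0 :=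
        Dop_iter_zero_fam (fun k => hc0 k) t v
      have hval : ∑ k ∈ Finset.range n,
          (deriv (c (k + 1)) 0 * (φ.comp (L (k + 1))) ((Dop L (fun k => c k 0))^[t + 1] v)
            + c (k + 1) 0 *
              (if t + 1 = 1 then
                ∑ k' ∈ Finset.range n,
                  deriv (c (k' + 1)) 0 * (φ.comp (L (k + 1))) (L (k' + 1) v)
               else 0))
          = 0 := by
        refine Finset.sum_eq_zero fun k _ => ?_
        rw [hz, hc0, map_zero, mul_zero, zero_mul, add_zero]
      rw [hval] at h
      exact h

lemma hasDerivAt_expD (hPsum : ∀ v : W, ∑ᶠ m, P m v = v)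
    (hLP : ∀ (k m : ℕ) (v : W), P m (L k v) = L k (P (m + k) v))
    {c : ℕ → ℂ → ℂ} (hcd : ∀ k, DifferentiableAt ℂ (c k) 0) (hc0 : ∀ k, c k 0 = 0)
    {n : ℕ} {v : W} (hv : degLE P n v) (φ : W →ₗ[ℂ] ℂ) :
    HasDerivAt (fun ζ => φ (expD L (fun k => c k ζ) v))
      (∑ k ∈ Finset.range n, deriv (c (k + 1)) 0 * φ (L (k + 1) v)) 0 := by
  have hfun : (fun ζ => φ (expD L (fun k => c k ζ) v))
      = fun ζ => ∑ j ∈ Finset.range (n + 1),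
          (j.factorial : ℂ)⁻¹ * φ ((Dop L (fun k => c k ζ))^[j] v) := by
    funext ζ
    rw [expD_eq_sum hPsum hLP hv, map_sum]
    simp [smul_eq_mul]
  rw [hfun]
  have h := HasDerivAt.fun_sum (u := Finset.range (n + 1)) (x := (0:ℂ)) (fun j _ =>
    (hasDerivAt_iter hPsum hLP hcd hc0 hv j φ).const_mul ((j.factorial : ℂ)⁻¹))
  have hval : ∑ j ∈ Finset.range (n + 1),
      (j.factorial : ℂ)⁻¹ *
        (if j = 1 then ∑ k ∈ Finset.range n, deriv (c (k + 1)) 0 * φ (L (k + 1) v) else 0)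
      = ∑ k ∈ Finset.range n, deriv (c (k + 1)) 0 * φ (L (k + 1) v) := by
    rcases n with _ | n
    · simp
    · have hcong : ∀ j ∈ Finset.range (n + 2),
          (j.factorial : ℂ)⁻¹ *
            (if j = 1 then
              ∑ k ∈ Finset.range (n + 1), deriv (c (k + 1)) 0 * φ (L (k + 1) v) else 0)
          = if j = 1 then
              ∑ k ∈ Finset.range (n + 1), deriv (c (k + 1)) 0 * φ (L (k + 1) v) else 0 := by
        intro j _
        split_ifs with h1
        · subst h1; simp [Nat.factorial]
        · simp
      rw [Finset.sum_congr rfl hcong, Finset.sum_ite_eq' (Finset.range (n + 2)) 1,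
        if_pos (Finset.mem_range.mpr (by omega))]
  rw [hval] at h
  exact h

lemma hasDerivAt_Uop (hPsum : ∀ v : W, ∑ᶠ m, P m v = v)
    (hL0 : ∀ (m : ℕ) (v : W), L 0 (P m v) = (m : ℂ) • P m v)
    (hLP : ∀ (k m : ℕ) (v : W), P m (L k v) = L k (P (m + k) v))
    {c : ℕ → ℂ → ℂ} (hcd : ∀ k, DifferentiableAt ℂ (c k) 0) (hc0 : ∀ k, c k 0 = 0)
    {a : ℂ → ℂ} (had : DifferentiableAt ℂ a 0) (ha0 : a 0 = 1)
    {n : ℕ} {v : W} (hv : degLE P n v) (φ : W →ₗ[ℂ] ℂ) :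
    HasDerivAt (fun ζ => φ (Uop L P (a ζ) (fun k => c k ζ) v))
      (deriv a 0 * φ (L 0 v)
        + ∑ k ∈ Finset.range n, deriv (c (k + 1)) 0 * φ (L (k + 1) v)) 0 := by
  have hE : ∀ ζ : ℂ, degLE P n (expD L (fun k => c k ζ) v) :=
    fun ζ => degLE_expD hPsum hLP hv _
  have hfun : (fun ζ => φ (Uop L P (a ζ) (fun k => c k ζ) v))
      = fun ζ => ∑ m ∈ Finset.range (n + 1),
          a ζ ^ m * (φ.comp (P m)) (expD L (fun k => c k ζ) v) := by
    funext ζ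
    rw [Uop, aPow_eq_sum (hE ζ), map_sum]
    simp [smul_eq_mul]
  rw [hfun]
  have h := HasDerivAt.fun_sum (u := Finset.range (n + 1)) (x := (0:ℂ)) (fun m _ =>
    (had.hasDerivAt.fun_pow m).fun_mul (hasDerivAt_expD hPsum hLP hcd hc0 hv (φ.comp (P m))))
  have hE0 : expD L (fun k => c k 0) v = v := expD_zero_fam hPsum hLP hv (fun k => hc0 k)
  have hLk : ∀ k : ℕ, ∑ m ∈ Finset.range (n + 1), φ (P m (L (k + 1) v)) = φ (L (k + 1) v) := by
    intro k
    rw [← map_sum, sum_P_eq hPsum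
      (degLE_mono (Nat.sub_le n 1) (degLE_L hLP hv (Nat.succ_le_succ (Nat.zero_le k))))]
  have hval : ∑ m ∈ Finset.range (n + 1),
      (((m : ℂ) * a 0 ^ (m - 1) * deriv a 0) * (φ.comp (P m)) (expD L (fun k => c k 0) v)
        + a 0 ^ m *
          ∑ k ∈ Finset.range n, deriv (c (k + 1)) 0 * (φ.comp (P m)) (L (k + 1) v))
      = deriv a 0 * φ (L 0 v)
        + ∑ k ∈ Finset.range n, deriv (c (k + 1)) 0 * φ (L (k + 1) v) := by
    simp only [ha0, one_pow, one_mul, mul_one, hE0, LinearMap.comp_apply]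
    rw [Finset.sum_add_distrib]
    congr 1
    · rw [L0_eq_sum hPsum hL0 hv, map_sum, Finset.mul_sum]
      refine Finset.sum_congr rfl fun m _ => ?_
      rw [map_smul, smul_eq_mul]
      ring
    · rw [Finset.sum_comm]
      refine Finset.sum_congr rfl fun k _ => ?_
      rw [← hLk k, Finset.mul_sum]
  rw [hval] at h
  exact h

end AuxDeriv

theorem deriv_Uop_at_zero
    (L P : ℕ → V →ₗ[ℂ] V)
    -- the grading: `P m` are the projections onto `V(m)`
    (hPfin : ∀ v : V, (Function.support fun m => P m v).Finite)
    (hPsum : ∀ v : V, ∑ᶠ m, P m v = v)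
    (hPP : ∀ (m m' : ℕ) (v : V), P m (P m' v) = if m = m' then P m' v else 0)
    -- `L 0` acts on `V(m)` as `m`, and `L k` lowers degrees by `k`
    (hL0 : ∀ (m : ℕ) (v : V), L 0 (P m v) = (m : ℂ) • P m v)
    (hLP : ∀ (k m : ℕ) (v : V), P m (L k v) = L k (P (m + k) v))
    -- the families `ρ_ζ` and `ρ_ζ⁻¹`, with coordinates `c`, `cinv`
    (T : Set ℂ) (hT : IsOpen T) (h0T : (0 : ℂ) ∈ T)
    (ρ ρinv : ℂ → PowerSeries ℂ) (c cinv : ℕ → ℂ → ℂ)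
    (hρ0 : ∀ ζ ∈ T, coeff 0 (ρ ζ) = 0)
    (ha1 : ∀ ζ ∈ T, coeff 1 (ρ ζ) ≠ 0)
    (hhol : ∀ n : ℕ, DifferentiableOn ℂ (fun ζ => coeff n (ρ ζ)) T)
    (hconv : ∀ ζ ∈ T, ∃ r : ℝ, 0 < r ∧ Summable fun n : ℕ => ‖coeff n (ρ ζ)‖ * r ^ n)
    (hid : ρ 0 = PowerSeries.X)
    (hchol : ∀ k : ℕ, DifferentiableOn ℂ (c k) T)
    (hc0 : ∀ k : ℕ, c k 0 = 0)
    (hdecomp : ∀ ζ ∈ T, ρ ζ = PowerSeries.C (coeff 1 (ρ ζ)) * expFlow (fun k => c k ζ))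
    (hcinvhol : ∀ k : ℕ, DifferentiableOn ℂ (cinv k) T)
    (hcinv0 : ∀ k : ℕ, cinv k 0 = 0)
    (hdecompinv : ∀ ζ ∈ T,
      ρinv ζ = PowerSeries.C (coeff 1 (ρinv ζ)) * expFlow (fun k => cinv k ζ))
    -- `ρinv_ζ` is the compositional inverse of `ρ_ζ`
    (hinv : ∀ ζ ∈ T, pcomp (ρ ζ) (ρinv ζ) = PowerSeries.X)
    (hinv' : ∀ ζ ∈ T, pcomp (ρinv ζ) (ρ ζ) = PowerSeries.X)
    -- a vector `v ∈ V^{≤n}`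
    (n : ℕ) (v : V) (hv : ∀ m : ℕ, n < m → P m v = 0) :
    ∀ φ : V →ₗ[ℂ] ℂ,
      HasDerivAt (fun ζ => φ (Uop L P (coeff 1 (ρ ζ)) (fun k => c k ζ) v))
        (φ (∑ᶠ k : ℕ, (((k + 1).factorial : ℂ)⁻¹ *
            deriv (fun ζ => ((k + 1).factorial : ℂ) * coeff (k + 1) (ρ ζ)) 0) • L k v)) 0 ∧
      HasDerivAt (fun ζ => φ (Uop L P (coeff 1 (ρinv ζ)) (fun k => cinv k ζ) v))
        (φ (-∑ᶠ k : ℕ, (((k + 1).factorial : ℂ)⁻¹ *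
            deriv (fun ζ => ((k + 1).factorial : ℂ) * coeff (k + 1) (ρ ζ)) 0) • L k v)) 0 := by
  intro φ
  have hmem : T ∈ nhds (0 : ℂ) := hT.mem_nhds h0T
  have hvdeg : degLE P n v := hv
  have had : DifferentiableAt ℂ (fun ζ => coeff 1 (ρ ζ)) 0 :=
    (hhol 1).differentiableAt hmem
  have ha0 : coeff 1 (ρ 0) = 1 := by rw [hid, coeff_one_X]
  have hcd : ∀ k, DifferentiableAt ℂ (c k) 0 := fun k => (hchol k).differentiableAt hmem
  have hbd : ∀ n' : ℕ, HasDerivAt (fun ζ => coeff n' (ρ ζ))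
      (deriv (fun ζ => coeff 1 (ρ ζ)) 0 * coeff n' (PowerSeries.X : PowerSeries ℂ)
        + if 2 ≤ n' then deriv (c (n' - 1)) 0 else 0) 0 :=
    fun n' => hasDerivAt_coeff_fam hT h0T hcd hc0 had ha0 hdecomp n'
  have hDk : ∀ k : ℕ, deriv (fun ζ => coeff (k + 2) (ρ ζ)) 0 = deriv (c (k + 1)) 0 := by
    intro k
    have h := (hbd (k + 2)).deriv
    rw [PowerSeries.coeff_X, if_neg (by omega), mul_zero, zero_add, if_pos (by omega)] at h
    exact h
  have hcoef : ∀ k : ℕ,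
      (((k + 1).factorial : ℂ)⁻¹ *
          deriv (fun ζ => ((k + 1).factorial : ℂ) * coeff (k + 1) (ρ ζ)) 0)
        = deriv (fun ζ => coeff (k + 1) (ρ ζ)) 0 := by
    intro k
    rw [deriv_const_mul _ ((hhol (k + 1)).differentiableAt hmem), inv_mul_cancel_left₀]
    exact_mod_cast Nat.factorial_ne_zero (k + 1)
  have hLz : ∀ j, n < j → L j v = 0 := fun j hj => L_eq_zero hPsum hLP hvdeg hj
  have hsum : (∑ᶠ k : ℕ, (((k + 1).factorial : ℂ)⁻¹ *
        deriv (fun ζ => ((k + 1).factorial : ℂ) * coeff (k + 1) (ρ ζ)) 0) • L k v)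
      = ∑ k ∈ Finset.range (n + 1), deriv (fun ζ => coeff (k + 1) (ρ ζ)) 0 • L k v := by
    have hfun : (fun k : ℕ => (((k + 1).factorial : ℂ)⁻¹ *
        deriv (fun ζ => ((k + 1).factorial : ℂ) * coeff (k + 1) (ρ ζ)) 0) • L k v)
        = fun k : ℕ => deriv (fun ζ => coeff (k + 1) (ρ ζ)) 0 • L k v :=
      funext fun k => by rw [hcoef k]
    rw [hfun]
    apply finsum_eq_sum_of_support_subset
    intro k hk
    simp only [Function.mem_support, ne_eq] at hk
    simp only [Finset.coe_range, Set.mem_Iio]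
    by_contra hcon
    push_neg at hcon
    exact hk (by rw [hLz k (by omega), smul_zero])
  have hφsum : φ (∑ᶠ k : ℕ, (((k + 1).factorial : ℂ)⁻¹ *
        deriv (fun ζ => ((k + 1).factorial : ℂ) * coeff (k + 1) (ρ ζ)) 0) • L k v)
      = deriv (fun ζ => coeff 1 (ρ ζ)) 0 * φ (L 0 v)
        + ∑ k ∈ Finset.range n, deriv (fun ζ => coeff (k + 2) (ρ ζ)) 0 * φ (L (k + 1) v) := by
    rw [hsum, map_sum]
    simp only [map_smul, smul_eq_mul]
    rw [Finset.sum_range_succ', add_comm]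
  constructor
  · have h := hasDerivAt_Uop hPsum hL0 hLP hcd hc0 had ha0 hvdeg φ
    have hval : φ (∑ᶠ k : ℕ, (((k + 1).factorial : ℂ)⁻¹ *
          deriv (fun ζ => ((k + 1).factorial : ℂ) * coeff (k + 1) (ρ ζ)) 0) • L k v)
        = deriv (fun ζ => coeff 1 (ρ ζ)) 0 * φ (L 0 v)
          + ∑ k ∈ Finset.range n, deriv (c (k + 1)) 0 * φ (L (k + 1) v) := by
      rw [hφsum]
      congr 1
      exact Finset.sum_congr rfl fun k _ => by rw [hDk k]
    rw [hval]
    exact h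
  · -- the inverse family
    have hρinv0 : ρinv 0 = PowerSeries.X := by
      have h := hinv' 0 h0T
      rwa [hid, pcomp_X_right] at h
    have hainv0 : coeff 1 (ρinv 0) = 1 := by rw [hρinv0, coeff_one_X]
    have hmul : ∀ ζ ∈ T, coeff 1 (ρinv ζ) * coeff 1 (ρ ζ) = 1 := by
      intro ζ hζ
      have h := congrArg (coeff 1) (hinv' ζ hζ)
      rw [coeff_one_X, pcomp, coeff_mk] at h
      simpa [Finset.sum_range_succ, pow_one, PowerSeries.coeff_one] using h
    have hainv : HasDerivAt (fun ζ => coeff 1 (ρinv ζ))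
        (-deriv (fun ζ => coeff 1 (ρ ζ)) 0) 0 := by
      have hne : coeff 1 (ρ 0) ≠ 0 := by rw [ha0]; exact one_ne_zero
      have h := had.hasDerivAt.inv hne
      have heq : (fun ζ => coeff 1 (ρinv ζ)) =ᶠ[nhds (0 : ℂ)]
          fun ζ => (coeff 1 (ρ ζ))⁻¹ := by
        filter_upwards [hmem] with ζ hζ
        exact eq_inv_of_mul_eq_one_left (hmul ζ hζ)
      have h2 := h.congr_of_eventuallyEq heq
      rw [ha0] at h2
      norm_num at h2
      exact h2
    have hcinvd : ∀ k, DifferentiableAt ℂ (cinv k) 0 :=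
      fun k => (hcinvhol k).differentiableAt hmem
    have hbinv : ∀ n' : ℕ, HasDerivAt (fun ζ => coeff n' (ρinv ζ))
        (deriv (fun ζ => coeff 1 (ρinv ζ)) 0 * coeff n' (PowerSeries.X : PowerSeries ℂ)
          + if 2 ≤ n' then deriv (cinv (n' - 1)) 0 else 0) 0 :=
      fun n' => hasDerivAt_coeff_fam hT h0T hcinvd hcinv0 hainv.differentiableAt hainv0
        hdecompinv n'
    have hdainv : deriv (fun ζ => coeff 1 (ρinv ζ)) 0
        = -deriv (fun ζ => coeff 1 (ρ ζ)) 0 := hainv.deriv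
    have hbinvd : ∀ n' : ℕ, DifferentiableAt ℂ (fun ζ => coeff n' (ρinv ζ)) 0 :=
      fun n' => (hbinv n').differentiableAt
    have hpow : ∀ (m n' : ℕ), DifferentiableAt ℂ (fun ζ => coeff n' ((ρinv ζ) ^ m)) 0 := by
      intro m
      induction m with
      | zero =>
        intro n'
        simp only [pow_zero]
        exact differentiableAt_const _
      | succ m ih =>
        intro n'
        have hfun : (fun ζ => coeff n' ((ρinv ζ) ^ (m + 1)))
            = fun ζ => ∑ p ∈ Finset.HasAntidiagonal.antidiagonal n',
                coeff p.1 ((ρinv ζ) ^ m) * coeff p.2 (ρinv ζ) := by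
          funext ζ
          rw [pow_succ, coeff_mul]
        rw [hfun]
        exact DifferentiableAt.fun_sum fun p _ => (ih p.1).mul (hbinvd p.2)
    have hcinvD : ∀ k : ℕ, deriv (cinv (k + 1)) 0
        = -deriv (fun ζ => coeff (k + 2) (ρ ζ)) 0 := by
      intro k
      have hDA := HasDerivAt.fun_sum (u := Finset.range (k + 3)) (x := (0 : ℂ)) (fun m _ =>
        (((hhol m).differentiableAt hmem).hasDerivAt).mul ((hpow m (k + 2)).hasDerivAt))
      have hzero : HasDerivAt (fun ζ => ∑ m ∈ Finset.range (k + 3),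
          coeff m (ρ ζ) * coeff (k + 2) ((ρinv ζ) ^ m)) 0 0 := by
        apply (hasDerivAt_const (0 : ℂ) (0 : ℂ)).congr_of_eventuallyEq
        filter_upwards [hmem] with ζ hζ
        have h := congrArg (coeff (k + 2)) (hinv ζ hζ)
        rw [pcomp, coeff_mk, PowerSeries.coeff_X, if_neg (by omega)] at h
        exact h
      have huniq := hDA.unique hzero
      simp only [hρinv0, hid, PowerSeries.coeff_X_pow, PowerSeries.coeff_X] at huniq
      rw [Finset.sum_add_distrib] at huniq
      have h1 : ∑ m ∈ Finset.range (k + 3),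
          deriv (fun ζ => coeff m (ρ ζ)) 0 * (if k + 2 = m then (1 : ℂ) else 0)
          = deriv (fun ζ => coeff (k + 2) (ρ ζ)) 0 := by
        have hcong : ∀ m ∈ Finset.range (k + 3),
            deriv (fun ζ => coeff m (ρ ζ)) 0 * (if k + 2 = m then (1 : ℂ) else 0)
              = if k + 2 = m then deriv (fun ζ => coeff m (ρ ζ)) 0 else 0 := by
          intro m _
          split_ifs <;> simp
        rw [Finset.sum_congr rfl hcong, Finset.sum_ite_eq (Finset.range (k + 3)) (k + 2),
          if_pos (Finset.mem_range.mpr (by omega))]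
      have h2 : ∑ m ∈ Finset.range (k + 3),
          (if m = 1 then (1 : ℂ) else 0) * deriv (fun ζ => coeff (k + 2) ((ρinv ζ) ^ m)) 0
          = deriv (fun ζ => coeff (k + 2) (ρinv ζ)) 0 := by
        have hcong : ∀ m ∈ Finset.range (k + 3),
            (if m = 1 then (1 : ℂ) else 0) * deriv (fun ζ => coeff (k + 2) ((ρinv ζ) ^ m)) 0
              = if m = 1 then deriv (fun ζ => coeff (k + 2) ((ρinv ζ) ^ m)) 0 else 0 := by
          intro m _
          split_ifs <;> simp
        rw [Finset.sum_congr rfl hcong, Finset.sum_ite_eq' (Finset.range (k + 3)) 1,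
          if_pos (Finset.mem_range.mpr (by omega))]
        have : (fun ζ => coeff (k + 2) ((ρinv ζ) ^ 1)) = fun ζ => coeff (k + 2) (ρinv ζ) := by
          funext ζ
          rw [pow_one]
        rw [this]
      rw [h1, h2] at huniq
      have h3 := (hbinv (k + 2)).deriv
      rw [PowerSeries.coeff_X, if_neg (by omega), mul_zero, zero_add, if_pos (by omega)] at h3
      rw [show (k + 2 - 1) = k + 1 from rfl] at h3
      rw [← h3]
      linear_combination huniq
    have h := hasDerivAt_Uop hPsum hL0 hLP hcinvd hcinv0 hainv.differentiableAt hainv0 hvdeg φ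
    have hval2 : φ (-∑ᶠ k : ℕ, (((k + 1).factorial : ℂ)⁻¹ *
          deriv (fun ζ => ((k + 1).factorial : ℂ) * coeff (k + 1) (ρ ζ)) 0) • L k v)
        = deriv (fun ζ => coeff 1 (ρinv ζ)) 0 * φ (L 0 v)
          + ∑ k ∈ Finset.range n, deriv (cinv (k + 1)) 0 * φ (L (k + 1) v) := by
      rw [map_neg, hφsum, hdainv]
      have hrw : ∑ k ∈ Finset.range n, deriv (cinv (k + 1)) 0 * φ (L (k + 1) v)
          = ∑ k ∈ Finset.range n,
              -(deriv (fun ζ => coeff (k + 2) (ρ ζ)) 0 * φ (L (k + 1) v)) :=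
        Finset.sum_congr rfl fun k _ => by rw [hcinvD k, neg_mul]
      rw [hrw, Finset.sum_neg_distrib, neg_mul, ← neg_add]
    rw [hval2]
    exact h

end
end

section
/- Let A be the annulus-type open set and let β : A × B → ℂ, (z,b) ↦ β_b(z), be a continuous family (b in a connected topological space B) of injective continuous maps on a circle rS^1 ⊂ ℂ, with β_{b_0}(z) = z for some base point b_0 ∈ B, and with 0 ∉ β_b(rS^1) for all b ∈ B. Let Γ_b be the Jordan curve β_b|_{rS^1} and Ω_b, Ω̃_b the bounded and unbounded components of ℂP^1 − Γ_b (∞ ∈ Ω̃_b). Then: (i) the sets O = {(z,b) : z ∈ Ω_b} and Õ = {(z,b) : z ∈ Ω̃_b} are open in ℂP^1 × B; (ii) 0 ∈ Ω_b for every b ∈ B. -/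
/-!
STATEMENT 11: Let `β : (z, b) ↦ β_b(z)` be a continuous family (over a connected topological
space `B`) of injective continuous maps on a circle `r𝕊¹ ⊂ ℂ`, with `β_{b₀}(z) = z` for some
base point `b₀ ∈ B`, and with `0 ∉ β_b(r𝕊¹)` for all `b ∈ B`.  Let `Γ_b` be the Jordan curve
`β_b|_{r𝕊¹}` and `Ω_b`, `Ω̃_b` the bounded and unbounded components of the complement of
`Γ_b` (by the Jordan curve theorem; on `ℂP¹`, `∞ ∈ Ω̃_b`).  Then:
(i) the sets `O = {(z,b) : z ∈ Ω_b}` and `Õ = {(z,b) : z ∈ Ω̃_b}` are open in `ℂ × B`;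
(ii) `0 ∈ Ω_b` for every `b ∈ B`.
-/

open Metric

open Complex Set Metric Real

namespace JordanAux

/-- `Wnd γ n`: the loop `γ` (on `[0,1]`) has winding number `n` around `0`,
witnessed by a continuous logarithm lift. -/
def Wnd (γ : ℝ → ℂ) (n : ℤ) : Prop :=
  ∃ θ : ℝ → ℂ, Continuous θ ∧ (∀ t ∈ Icc (0:ℝ) 1, Complex.exp (θ t) = γ t) ∧
    θ 1 - θ 0 = n * (2 * π * I)

lemma wnd_congr {γ γ' : ℝ → ℂ} {n : ℤ} (h : ∀ t ∈ Icc (0:ℝ) 1, γ t = γ' t)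
    (hw : Wnd γ n) : Wnd γ' n := by
  obtain ⟨θ, hc, hl, hd⟩ := hw
  exact ⟨θ, hc, fun t ht => (hl t ht).trans (h t ht), hd⟩

lemma mem_slit_of_abs_lt {z : ℂ} (h : ‖z - 1‖ < 1) : z ∈ slitPlane := by
  have := Complex.mem_slitPlane_of_norm_lt_one (z := z - 1) (by simpa using h)
  simpa using this

lemma ne_zero_of_abs_lt {z : ℂ} (h : ‖z - 1‖ < 1) : z ≠ 0 := by
  intro hz
  simp [hz] at h

lemma wnd_mul {γ γ' : ℝ → ℂ} {n m : ℤ} (h : Wnd γ n) (h' : Wnd γ' m) :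
    Wnd (fun t => γ t * γ' t) (n + m) := by
  obtain ⟨θ, hc, hl, hd⟩ := h
  obtain ⟨θ', hc', hl', hd'⟩ := h'
  refine ⟨fun t => θ t + θ' t, hc.add hc', fun t ht => ?_, ?_⟩
  · rw [Complex.exp_add, hl t ht, hl' t ht]
  · push_cast
    rw [show θ 1 + θ' 1 - (θ 0 + θ' 0) = (θ 1 - θ 0) + (θ' 1 - θ' 0) by ring, hd, hd']
    ring

lemma wnd_const {c : ℂ} (hc : c ≠ 0) : Wnd (fun _ => c) 0 := by
  refine ⟨fun _ => Complex.log c, continuous_const, fun t _ => Complex.exp_log hc, by simp⟩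

lemma wnd_ratio_zero {γ : ℝ → ℂ} (hγ : Continuous γ) (hloop : γ 1 = γ 0)
    (h : ∀ t ∈ Icc (0:ℝ) 1, ‖γ t - 1‖ < 1) : Wnd γ 0 := by
  have hmem : ∀ t : ℝ, max 0 (min t 1) ∈ Icc (0:ℝ) 1 := fun t =>
    ⟨le_max_left _ _, max_le (by norm_num) (min_le_right _ _)⟩
  refine ⟨fun t => Complex.log (γ (max 0 (min t 1))), ?_, fun t ht => ?_, ?_⟩
  · apply Continuous.clog
    · exact hγ.comp (continuous_const.max (continuous_id.min continuous_const))
    · intro t; exact mem_slit_of_abs_lt (h _ (hmem t))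
  · have : max 0 (min t 1) = t := by
      rw [min_eq_left ht.2, max_eq_right ht.1]
    simp only [this]
    exact Complex.exp_log (ne_zero_of_abs_lt (h t ht))
  · norm_num [hloop]


lemma wnd_unique {γ : ℝ → ℂ} {n m : ℤ} (hn : Wnd γ n) (hm : Wnd γ m) : n = m := by
  obtain ⟨θ, hc, hl, hd⟩ := hn
  obtain ⟨θ', hc', hl', hd'⟩ := hm
  -- integer-valued continuous function
  have hint : ∀ t ∈ Icc (0:ℝ) 1, ∃ k : ℤ, θ t - θ' t = k * (2 * π * I) := by
    intro t ht
    have : Complex.exp (θ t) = Complex.exp (θ' t) := by rw [hl t ht, hl' t ht]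
    obtain ⟨k, hk⟩ := Complex.exp_eq_exp_iff_exists_int.mp this
    exact ⟨k, by rw [hk]; ring⟩
  set f : ℝ → ℝ := fun t => ((θ t - θ' t) / (2 * π * I)).re with hf
  have hfc : Continuous f := by
    apply Complex.continuous_re.comp
    exact (hc.sub hc').div_const _
  have hfval : ∀ t ∈ Icc (0:ℝ) 1, ∃ k : ℤ, f t = k := by
    intro t ht
    obtain ⟨k, hk⟩ := hint t ht
    refine ⟨k, ?_⟩
    rw [hf]; simp only [hk]
    rw [mul_div_assoc, div_self Complex.two_pi_I_ne_zero, mul_one]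
    simp
  obtain ⟨k₀, hk₀⟩ := hfval 0 (by norm_num)
  obtain ⟨k₁, hk₁⟩ := hfval 1 (by norm_num)
  have hk01 : k₀ = k₁ := by
    by_contra hne
    -- a half-integer value lies between `f 0` and `f 1`
    have key : ∀ c : ℝ, c ∈ Icc (f 0) (f 1) ∪ Icc (f 1) (f 0) → ∃ t ∈ Icc (0:ℝ) 1, f t = c := by
      intro c hcmem
      rcases hcmem with hcm | hcm
      · obtain ⟨t, ht, hft⟩ := intermediate_value_Icc (by norm_num : (0:ℝ) ≤ 1)
          (hfc.continuousOn) hcm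
        exact ⟨t, ht, hft⟩
      · obtain ⟨t, ht, hft⟩ := intermediate_value_Icc' (by norm_num : (0:ℝ) ≤ 1)
          (hfc.continuousOn) hcm
        exact ⟨t, ht, hft⟩
    set c : ℝ := (min k₀ k₁ : ℤ) + 1/2 with hcdef
    have hcmem : c ∈ Icc (f 0) (f 1) ∪ Icc (f 1) (f 0) := by
      rcases lt_or_gt_of_ne hne with hlt | hlt
      · left
        constructor
        · rw [hk₀, hcdef]
          have : min k₀ k₁ = k₀ := min_eq_left hlt.le
          rw [this]; norm_num
        · rw [hk₁, hcdef]
          have h1 : min k₀ k₁ = k₀ := min_eq_left hlt.le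
          rw [h1]
          have : (k₀ : ℝ) + 1 ≤ k₁ := by exact_mod_cast hlt
          linarith
      · right
        constructor
        · rw [hk₁, hcdef]
          have : min k₀ k₁ = k₁ := min_eq_right hlt.le
          rw [this]; norm_num
        · rw [hk₀, hcdef]
          have h1 : min k₀ k₁ = k₁ := min_eq_right hlt.le
          rw [h1]
          have : (k₁ : ℝ) + 1 ≤ k₀ := by exact_mod_cast hlt
          linarith
    obtain ⟨t, ht, hft⟩ := key c hcmem
    obtain ⟨k, hk⟩ := hfval t ht
    rw [hk, hcdef] at hft
    have : (2 * k : ℝ) = 2 * (min k₀ k₁ : ℤ) + 1 := by linarith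
    have h2 : (2 * k : ℤ) = 2 * (min k₀ k₁) + 1 := by exact_mod_cast this
    omega
  -- now conclude
  have hsub : (θ 1 - θ' 1) - (θ 0 - θ' 0) = (n - m : ℤ) * (2 * π * I) := by
    have : (θ 1 - θ' 1) - (θ 0 - θ' 0) = (θ 1 - θ 0) - (θ' 1 - θ' 0) := by ring
    rw [this, hd, hd']
    push_cast; ring
  obtain ⟨a, ha⟩ := hint 0 (by norm_num)
  obtain ⟨b, hb⟩ := hint 1 (by norm_num)
  have hfa : f 0 = a := by
    rw [hf]; simp only [ha, mul_div_assoc, div_self Complex.two_pi_I_ne_zero, mul_one]; simp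
  have hfb : f 1 = b := by
    rw [hf]; simp only [hb, mul_div_assoc, div_self Complex.two_pi_I_ne_zero, mul_one]; simp
  have hab : a = b := by
    have e1 : (a : ℝ) = k₀ := by rw [← hfa, hk₀]
    have e2 : (b : ℝ) = k₁ := by rw [← hfb, hk₁]
    have : (a : ℝ) = b := by rw [e1, e2]; exact_mod_cast congrArg (fun x : ℤ => (x : ℝ)) hk01
    exact_mod_cast this
  have : ((n - m : ℤ) : ℂ) * (2 * π * I) = 0 := by
    rw [← hsub, hb, ha, hab]; ring
  have hnm : ((n - m : ℤ) : ℂ) = 0 := by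
    rcases mul_eq_zero.mp this with h | h
    · exact h
    · exact absurd h Complex.two_pi_I_ne_zero
  have : (n - m : ℤ) = 0 := by exact_mod_cast hnm
  omega


lemma exists_lift {γ : ℝ → ℂ} (hγ : Continuous γ) (h0 : ∀ t, γ t ≠ 0) :
    ∃ θ : ℝ → ℂ, Continuous θ ∧ ∀ t ∈ Icc (0:ℝ) 1, Complex.exp (θ t) = γ t := by
  -- minimum modulus on [0,1]
  obtain ⟨t₀, ht₀, hmin⟩ := isCompact_Icc.exists_isMinOn (nonempty_Icc.mpr (by norm_num : (0:ℝ) ≤ 1))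
    ((continuous_norm.comp hγ).continuousOn)
  set m : ℝ := ‖γ t₀‖ with hm
  have hmpos : 0 < m := by
    rw [hm]
    exact norm_pos_iff.mpr (h0 t₀)
  have hmle : ∀ t ∈ Icc (0:ℝ) 1, m ≤ ‖γ t‖ := fun t ht => hmin ht
  -- uniform continuity
  have huc : UniformContinuousOn γ (Icc 0 1) :=
    isCompact_Icc.uniformContinuousOn_of_continuous hγ.continuousOn
  rw [Metric.uniformContinuousOn_iff] at huc
  obtain ⟨δ, hδpos, hδ⟩ := huc m hmpos
  obtain ⟨N', hN'⟩ := exists_nat_one_div_lt hδpos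
  set N : ℕ := N' + 1 with hNdef
  have hNpos : (0:ℝ) < N := by positivity
  have hNδ : 1 / (N:ℝ) < δ := by exact_mod_cast hN'
  -- key step estimate
  have hstep : ∀ a t : ℝ, a ∈ Icc (0:ℝ) 1 → t ∈ Icc (0:ℝ) 1 → |t - a| ≤ 1 / N →
      ‖γ t / γ a - 1‖ < 1 := by
    intro a t ha ht hta
    have hγa : γ a ≠ 0 := h0 a
    have habs : ‖γ t - γ a‖ < m := by
      have := hδ t ht a ha (lt_of_le_of_lt (by rwa [Real.dist_eq]) hNδ)
      rwa [Complex.dist_eq] at this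
    have : γ t / γ a - 1 = (γ t - γ a) / γ a := by field_simp
    rw [this, norm_div, div_lt_one (norm_pos_iff.mpr hγa)]
    exact lt_of_lt_of_le habs (hmle a ha)
  -- induction: lift on [0, k/N]
  have main : ∀ k : ℕ, k ≤ N → ∃ θ : ℝ → ℂ, Continuous θ ∧
      ∀ t ∈ Icc (0:ℝ) ((k:ℝ) / N), Complex.exp (θ t) = γ t := by
    intro k
    induction k with
    | zero =>
      intro _
      refine ⟨fun _ => Complex.log (γ 0), continuous_const, fun t ht => ?_⟩
      have : t = 0 := le_antisymm (by simpa using ht.2) ht.1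
      rw [this]
      exact Complex.exp_log (h0 0)
    | succ k ih =>
      intro hkN
      obtain ⟨θ, hθc, hθl⟩ := ih (Nat.le_of_succ_le hkN)
      set a : ℝ := (k:ℝ) / N with hadef
      set b : ℝ := ((k+1:ℕ):ℝ) / N with hbdef
      have ha01 : a ∈ Icc (0:ℝ) 1 := by
        constructor
        · positivity
        · rw [hadef, div_le_one hNpos]
          exact_mod_cast Nat.le_of_succ_le hkN
      have hb01 : b ∈ Icc (0:ℝ) 1 := by
        constructor
        · positivity
        · rw [hbdef, div_le_one hNpos]
          exact_mod_cast hkN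
      have hab : a ≤ b := by
        rw [hadef, hbdef]
        gcongr
        exact_mod_cast Nat.le_succ k
      have hba : b - a = 1 / N := by
        rw [hadef, hbdef]
        push_cast
        field_simp
        ring
      -- the extension
      set θ' : ℝ → ℂ := fun t => θ (min t a) + Complex.log (γ (max (min t b) a) / γ a) with hθ'
      have hclamp : ∀ t : ℝ, max (min t b) a ∈ Icc a b := by
        intro t
        constructor
        · exact le_max_right _ _
        · exact max_le (min_le_right _ _) hab
      have hclamp01 : ∀ t : ℝ, max (min t b) a ∈ Icc (0:ℝ) 1 := by
        intro t
        exact ⟨le_trans ha01.1 (hclamp t).1, le_trans (hclamp t).2 hb01.2⟩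
      have hclose : ∀ t : ℝ, ‖γ (max (min t b) a) / γ a - 1‖ < 1 := by
        intro t
        apply hstep a _ ha01 (hclamp01 t)
        rw [abs_sub_comm, abs_of_nonpos (by linarith [(hclamp t).1]), neg_sub]
        linarith [(hclamp t).2, hba.ge, hba.le]
      have hθ'c : Continuous θ' := by
        apply Continuous.add
        · exact hθc.comp (continuous_id.min continuous_const)
        · apply Continuous.clog
          · exact (hγ.comp ((continuous_id.min continuous_const).max continuous_const)).div_const _
          · intro t
            exact mem_slit_of_abs_lt (hclose t)
      refine ⟨θ', hθ'c, fun t ht => ?_⟩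
      rcases le_or_gt t a with hta | hta
      · have h1 : min t a = t := min_eq_left hta
        have h2 : max (min t b) a = a := by
          rw [min_eq_left (le_trans hta hab), max_eq_right hta]
        rw [hθ']
        simp only [h1, h2]
        rw [div_self (h0 a), Complex.log_one, add_zero]
        exact hθl t ⟨ht.1, by rw [hadef]; exact hta⟩
      · have h1 : min t a = a := min_eq_right hta.le
        have h2 : min t b = t := min_eq_left ht.2
        have h3 : max (min t b) a = t := by rw [h2, max_eq_left hta.le]
        rw [hθ']
        simp only [h1, h3]
        rw [Complex.exp_add, Complex.exp_log (div_ne_zero (h0 t) (h0 a)),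
          hθl a ⟨ha01.1, le_refl a⟩]
        rw [mul_div_assoc'] 
        exact mul_div_cancel_left₀ _ (h0 a)
  obtain ⟨θ, hθc, hθl⟩ := main N (le_refl N)
  refine ⟨θ, hθc, fun t ht => hθl t ?_⟩
  rwa [div_self (ne_of_gt hNpos)]

lemma wnd_exists {γ : ℝ → ℂ} (hγ : Continuous γ) (h0 : ∀ t, γ t ≠ 0)
    (hloop : γ 1 = γ 0) : ∃ n : ℤ, Wnd γ n := by
  obtain ⟨θ, hθc, hθl⟩ := exists_lift hγ h0
  have : Complex.exp (θ 1) = Complex.exp (θ 0) := by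
    rw [hθl 1 (by norm_num), hθl 0 (by norm_num), hloop]
  obtain ⟨n, hn⟩ := Complex.exp_eq_exp_iff_exists_int.mp this
  exact ⟨n, θ, hθc, hθl, by rw [hn]; ring⟩


/-- Dog-on-a-leash: loops uniformly closer to `γ` than `γ` is to `0` have the
same winding number. -/
lemma wnd_leash {γ γ' : ℝ → ℂ} {n : ℤ} (hγ : Continuous γ) (hγ' : Continuous γ')
    (h0 : ∀ t, γ t ≠ 0) (hl : γ 1 = γ 0) (hl' : γ' 1 = γ' 0)
    (hle : ∀ t ∈ Icc (0:ℝ) 1, ‖γ' t - γ t‖ < ‖γ t‖)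
    (h : Wnd γ n) : Wnd γ' n := by
  set q : ℝ → ℂ := fun t => γ' t / γ t with hq
  have hqc : Continuous q := hγ'.div hγ h0
  have hqloop : q 1 = q 0 := by rw [hq]; simp only [hl, hl']
  have hqsmall : ∀ t ∈ Icc (0:ℝ) 1, ‖q t - 1‖ < 1 := by
    intro t ht
    have hne := h0 t
    have : q t - 1 = (γ' t - γ t) / γ t := by
      rw [hq]; field_simp
    rw [this, norm_div, div_lt_one (norm_pos_iff.mpr (h0 t))]
    exact hle t ht
  have hq0 : Wnd q 0 := wnd_ratio_zero hqc hqloop hqsmall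
  have := wnd_mul h hq0
  rw [add_zero] at this
  apply wnd_congr ?_ this
  intro t _
  rw [hq]
  simp only []
  rw [mul_div_assoc']
  exact mul_div_cancel_left₀ _ (h0 t)

/-- The standard circle of radius `r > 0` winds once around `0`. -/
lemma wnd_circle {r : ℝ} (hr : 0 < r) :
    Wnd (fun t => circleMap 0 r (2 * π * t)) 1 := by
  refine ⟨fun t => (Real.log r : ℂ) + (2 * π * t) * I, ?_, fun t _ => ?_, ?_⟩
  · apply continuous_const.add
    exact (continuous_const.mul Complex.continuous_ofReal).mul continuous_const
  · rw [Complex.exp_add]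
    have h1 : Complex.exp ((Real.log r : ℝ) : ℂ) = (r : ℂ) := by
      rw [← Complex.ofReal_exp, Real.exp_log hr]
    rw [h1]
    simp only [circleMap, zero_add]
    push_cast
    ring
  · push_cast
    ring

/-- Tube-lemma style openness: for compact `X`, a strict uniform inequality is
an open condition on the parameter. -/
lemma isOpen_forall_lt {X Y : Type*} [TopologicalSpace X] [TopologicalSpace Y]
    [CompactSpace X] {F : X × Y → ℝ} (hF : Continuous F) (c : ℝ) :
    IsOpen {y : Y | ∀ x : X, F (x, y) < c} := by
  have h1 : IsClosed {q : X × Y | c ≤ F q} := isClosed_le continuous_const hF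
  have h2 : IsClosed (Prod.snd '' {q : X × Y | c ≤ F q}) :=
    isClosedMap_snd_of_compactSpace _ h1
  have heq : {y : Y | ∀ x : X, F (x, y) < c} = (Prod.snd '' {q : X × Y | c ≤ F q})ᶜ := by
    ext y
    simp only [mem_setOf_eq, mem_compl_iff, mem_image]
    constructor
    · intro h hmem
      obtain ⟨⟨x, y'⟩, hxy, hy⟩ := hmem
      simp only at hy
      subst hy
      exact absurd (h x) (not_lt.mpr hxy)
    · intro h x
      by_contra hc
      exact h ⟨(x, y), not_lt.mp hc, rfl⟩
  rw [heq]
  exact h2.isOpen_compl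

end JordanAux

open Complex Set JordanAux

theorem jordan_interior_family_open_and_contains_zero
    {B : Type*} [TopologicalSpace B] [ConnectedSpace B]
    (r : ℝ) (hr : 0 < r) (b₀ : B)
    (β : ℂ → B → ℂ)
    (hcont : ContinuousOn (fun p : ℂ × B => β p.1 p.2) ((sphere (0 : ℂ) r) ×ˢ Set.univ))
    (hinj : ∀ b : B, Set.InjOn (fun z => β z b) (sphere (0 : ℂ) r))
    (hbase : ∀ z ∈ sphere (0 : ℂ) r, β z b₀ = z)
    (h0 : ∀ b : B, ∀ z ∈ sphere (0 : ℂ) r, β z b ≠ 0)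
    -- the two components of the complement of the Jordan curve `Γ_b = β_b(r𝕊¹)`,
    -- as provided by the Jordan curve theorem
    (Ω Ωt : B → Set ℂ)
    (hopen : ∀ b, IsOpen (Ω b)) (hopent : ∀ b, IsOpen (Ωt b))
    (hconn : ∀ b, IsConnected (Ω b)) (hconnt : ∀ b, IsConnected (Ωt b))
    (hcover : ∀ b, Ω b ∪ Ωt b = ((fun z => β z b) '' sphere (0 : ℂ) r)ᶜ)
    (hdisj : ∀ b, Disjoint (Ω b) (Ωt b))
    (hbdd : ∀ b, Bornology.IsBounded (Ω b))
    (hunbdd : ∀ b, ¬ Bornology.IsBounded (Ωt b)) :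
    -- (i) `O` and `Õ` are open
    IsOpen {p : ℂ × B | p.1 ∈ Ω p.2} ∧ IsOpen {p : ℂ × B | p.1 ∈ Ωt p.2} ∧
    -- (ii) `0` is inside `Γ_b` for every `b`
    ∀ b : B, (0 : ℂ) ∈ Ω b := by
  classical
  have hsC : IsCompact (sphere (0:ℂ) r) := isCompact_sphere 0 r
  haveI : CompactSpace (sphere (0:ℂ) r) := isCompact_iff_compactSpace.mp hsC
  haveI : Nonempty (sphere (0:ℂ) r) := (NormedSpace.sphere_nonempty.mpr hr.le).to_subtype
  set S := sphere (0:ℂ) r with hS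
  -- restricted β is continuous
  have hβX : Continuous fun q : S × B => β q.1 q.2 := by
    have := hcont.comp_continuous
      (f := fun q : S × B => ((q.1 : ℂ), q.2))
      ((continuous_subtype_val.comp continuous_fst).prodMk continuous_snd)
      (fun q => ⟨q.1.2, Set.mem_univ _⟩)
    exact this
  -- circle parametrization
  set cm : ℝ → ℂ := fun t => circleMap 0 r (2 * Real.pi * t) with hcm
  have hcmS : ∀ t, cm t ∈ S := fun t => circleMap_mem_sphere 0 hr.le _
  have hcmc : Continuous cm := (continuous_circleMap 0 r).comp (by continuity)
  have hcml : cm 1 = cm 0 := by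
    rw [hcm]
    simp only [mul_one, mul_zero]
    have := periodic_circleMap 0 r 0
    simpa using this
  -- the loops
  set L : ℂ × B → ℝ → ℂ := fun p t => β (cm t) p.2 - p.1 with hL
  have hLc : ∀ p : ℂ × B, Continuous (L p) := by
    intro p
    apply Continuous.sub ?_ continuous_const
    have hmk : Continuous fun t => ((⟨cm t, hcmS t⟩ : S), p.2) :=
      (hcmc.subtype_mk _).prodMk continuous_const
    exact hβX.comp hmk
  have hLloop : ∀ p, L p 1 = L p 0 := by
    intro p; rw [hL]; simp only [hcml]
  -- the off-curve set
  set U : Set (ℂ × B) := {p | ∀ ζ : S, β ζ p.2 ≠ p.1} with hU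
  have hLne : ∀ p ∈ U, ∀ t : ℝ, L p t ≠ 0 := by
    intro p hp t
    exact sub_ne_zero_of_ne (hp ⟨cm t, hcmS t⟩)
  have hex : ∀ p ∈ U, ∃ n : ℤ, Wnd (L p) n := fun p hp =>
    wnd_exists (hLc p) (hLne p hp) (hLloop p)
  have hUiff : ∀ p : ℂ × B, p ∈ U ↔ p.1 ∈ ((fun z => β z p.2) '' S)ᶜ := by
    intro p
    constructor
    · intro h hmem
      obtain ⟨z, hz, hze⟩ := hmem
      exact h ⟨z, hz⟩ hze
    · intro h ζ hζ
      exact h ⟨(ζ : ℂ), ζ.2, hζ⟩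
  -- the key local-constancy lemma
  have key : ∀ p ∈ U, ∃ V : Set (ℂ × B), IsOpen V ∧ p ∈ V ∧ V ⊆ U ∧
      ∀ q ∈ V, ∀ n : ℤ, Wnd (L p) n → Wnd (L q) n := by
    intro p hp
    have hcont1 : Continuous fun ζ : S => ‖β ζ p.2 - p.1‖ :=
      continuous_norm.comp ((hβX.comp (continuous_id.prodMk continuous_const)).sub
        continuous_const)
    obtain ⟨ζ₀, -, hζ₀⟩ := (isCompact_univ (X := S)).exists_isMinOn univ_nonempty
      hcont1.continuousOn
    set d := ‖β ζ₀ p.2 - p.1‖ with hd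
    have hdpos : 0 < d := norm_pos_iff.mpr (sub_ne_zero_of_ne (hp ζ₀))
    have hdle : ∀ ζ : S, d ≤ ‖β ζ p.2 - p.1‖ := fun ζ => hζ₀ (Set.mem_univ ζ)
    have hFc : Continuous fun w : S × (ℂ × B) =>
        ‖(β w.1 w.2.2 - w.2.1) - (β w.1 p.2 - p.1)‖ := by
      apply continuous_norm.comp
      apply Continuous.sub
      · exact (hβX.comp (continuous_fst.prodMk (continuous_snd.comp continuous_snd))).sub
          (continuous_fst.comp continuous_snd)
      · exact (hβX.comp (continuous_fst.prodMk continuous_const)).sub continuous_const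
    have hVopen : IsOpen {q : ℂ × B | ∀ ζ : S,
        ‖(β ζ q.2 - q.1) - (β ζ p.2 - p.1)‖ < d} := isOpen_forall_lt hFc d
    refine ⟨_, hVopen, ?_, ?_, ?_⟩
    · intro ζ; simp [hdpos]
    · intro q hq ζ heq
      have h1 := hq ζ
      rw [heq, sub_self, zero_sub, norm_neg] at h1
      exact absurd (hdle ζ) (not_le.mpr h1)
    · intro q hq n hn
      apply wnd_leash (hLc p) (hLc q) (hLne p hp) (hLloop p) (hLloop q) ?_ hn
      intro t _
      have h1 := hq ⟨cm t, hcmS t⟩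
      have h2 := hdle ⟨cm t, hcmS t⟩
      exact lt_of_lt_of_le h1 h2
  -- constancy in the z variable on preconnected sets
  have hconstz : ∀ b : B, ∀ s : Set ℂ, IsPreconnected s →
      (∀ z ∈ s, ((z, b) : ℂ × B) ∈ U) →
      ∀ n : ℤ, ∀ z₁ ∈ s, Wnd (L (z₁, b)) n → ∀ z₂ ∈ s, Wnd (L (z₂, b)) n := by
    intro b s hs hsU n z₁ hz₁ hw z₂ hz₂
    set u : Set ℂ := {z | (z, b) ∈ U ∧ Wnd (L (z, b)) n} with hu
    set v : Set ℂ := {z | (z, b) ∈ U ∧ ∃ m : ℤ, m ≠ n ∧ Wnd (L (z, b)) m} with hv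
    have hslice : ∀ z : ℂ, ∀ V : Set (ℂ × B), IsOpen V →
        IsOpen {z' : ℂ | ((z', b) : ℂ × B) ∈ V} := by
      intro z V hV
      exact hV.preimage (continuous_id.prodMk continuous_const)
    have huo : IsOpen u := by
      rw [isOpen_iff_forall_mem_open]
      rintro z ⟨hzU, hzw⟩
      obtain ⟨V, hVo, hpV, hVU, htrans⟩ := key (z, b) hzU
      refine ⟨{z' | ((z', b) : ℂ × B) ∈ V}, ?_, hslice z V hVo, hpV⟩
      intro z' hz'
      exact ⟨hVU hz', htrans (z', b) hz' n hzw⟩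
    have hvo : IsOpen v := by
      rw [isOpen_iff_forall_mem_open]
      rintro z ⟨hzU, m, hmn, hzw⟩
      obtain ⟨V, hVo, hpV, hVU, htrans⟩ := key (z, b) hzU
      refine ⟨{z' | ((z', b) : ℂ × B) ∈ V}, ?_, hslice z V hVo, hpV⟩
      intro z' hz'
      exact ⟨hVU hz', m, hmn, htrans (z', b) hz' m hzw⟩
    have hsub : s ⊆ u ∪ v := by
      intro z hz
      obtain ⟨k, hk⟩ := hex (z, b) (hsU z hz)
      by_cases hkn : k = n
      · exact Or.inl ⟨hsU z hz, hkn ▸ hk⟩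
      · exact Or.inr ⟨hsU z hz, k, hkn, hk⟩
    have hdisj_uv : Disjoint u v := by
      rw [Set.disjoint_left]
      rintro z hzu ⟨-, m, hmn, hm⟩
      exact hmn (wnd_unique hm hzu.2)
    have hfinal := hs.subset_left_of_subset_union huo hvo hdisj_uv hsub
      ⟨z₁, hz₁, hsU _ hz₁, hw⟩
    exact (hfinal hz₂).2
  -- 0 is always off the curve
  have hU0 : ∀ b, (((0 : ℂ), b) : ℂ × B) ∈ U := fun b ζ => h0 b ζ ζ.2
  -- base computation at b₀
  have hbase1 : Wnd (L (0, b₀)) 1 := by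
    apply wnd_congr ?_ (wnd_circle hr)
    intro t _
    rw [hL]
    simp only [hbase (cm t) (hcmS t), sub_zero]
    rfl
  -- winding of 0 is 1 for every b
  have hW0 : ∀ b, Wnd (L (0, b)) 1 := by
    set T : Set B := {b | Wnd (L ((0 : ℂ), b)) 1} with hT
    have hTopen : IsOpen T := by
      rw [isOpen_iff_forall_mem_open]
      intro b hb
      obtain ⟨V, hVo, hpV, hVU, htrans⟩ := key ((0 : ℂ), b) (hU0 b)
      refine ⟨{b' | (((0 : ℂ), b') : ℂ × B) ∈ V}, ?_,
        hVo.preimage (continuous_const.prodMk continuous_id), hpV⟩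
      intro b' hb'
      exact htrans ((0 : ℂ), b') hb' 1 hb
    have hTcopen : IsOpen Tᶜ := by
      rw [isOpen_iff_forall_mem_open]
      intro b hb
      obtain ⟨k, hk⟩ := hex ((0 : ℂ), b) (hU0 b)
      have hk1 : k ≠ 1 := by
        intro h
        subst h
        exact hb hk
      obtain ⟨V, hVo, hpV, hVU, htrans⟩ := key ((0 : ℂ), b) (hU0 b)
      refine ⟨{b' | (((0 : ℂ), b') : ℂ × B) ∈ V}, ?_,
        hVo.preimage (continuous_const.prodMk continuous_id), hpV⟩
      intro b' hb' hmem
      exact hk1 (wnd_unique (htrans ((0 : ℂ), b') hb' k hk) hmem)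
    have hclopen : IsClopen T := ⟨isOpen_compl_iff.mp hTcopen, hTopen⟩
    have := (isClopen_iff.mp hclopen).resolve_left (by
      intro h
      exact absurd (h ▸ hbase1 : (b₀ : B) ∈ (∅ : Set B)) (Set.notMem_empty b₀))
    intro b
    exact (this ▸ Set.mem_univ b : b ∈ T)
  -- off-curve membership from the cover
  have hcompl : ∀ b, ∀ z, z ∈ Ω b ∪ Ωt b → ((z, b) : ℂ × B) ∈ U := by
    intro b z hz
    rw [hcover b] at hz
    exact (hUiff (z, b)).mpr hz
  -- points of Ωt have winding number 0
  have hfar : ∀ b, ∀ w ∈ Ωt b, Wnd (L (w, b)) 0 := by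
    intro b w hw
    have hcont1 : Continuous fun ζ : S => ‖β ζ b‖ :=
      continuous_norm.comp (hβX.comp (continuous_id.prodMk continuous_const))
    obtain ⟨ζ₁, -, hζ₁⟩ := (isCompact_univ (X := S)).exists_isMaxOn univ_nonempty
      hcont1.continuousOn
    set R := ‖β ζ₁ b‖ with hR
    have hRnn : 0 ≤ R := norm_nonneg _
    have hRb : ∀ ζ : S, ‖β ζ b‖ ≤ R := fun ζ => hζ₁ (Set.mem_univ ζ)
    obtain ⟨w', hw', hwR⟩ : ∃ w' ∈ Ωt b, R < ‖w'‖ := by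
      by_contra hc
      push_neg at hc
      apply hunbdd b
      apply Bornology.IsBounded.subset (Metric.isBounded_closedBall (x := (0:ℂ)) (r := R))
      intro z hz
      rw [Metric.mem_closedBall, Complex.dist_eq, sub_zero]
      exact hc z hz
    have hU' : ((w', b) : ℂ × B) ∈ U := by
      intro ζ heq
      have := hRb ζ
      rw [heq] at this
      exact absurd this (not_le.mpr hwR)
    have hwne : w' ≠ 0 := by
      intro h
      rw [h] at hwR
      simp at hwR
      exact absurd hRnn (not_le.mpr hwR)
    have h0' : Wnd (L (w', b)) 0 := by
      apply wnd_leash continuous_const (hLc (w', b))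
        (fun _ => neg_ne_zero.mpr hwne) rfl (hLloop (w', b)) ?_ (wnd_const (neg_ne_zero.mpr hwne))
      intro t _
      have heq : L (w', b) t - (-w') = β (cm t) b := by
        rw [hL]; ring
      rw [heq, norm_neg]
      exact lt_of_le_of_lt (hRb ⟨cm t, hcmS t⟩) hwR
    exact hconstz b (Ωt b) (hconnt b).isPreconnected
      (fun z hz => hcompl b z (Or.inr hz)) 0 w' hw' h0' w hw
  -- (ii): 0 lies in Ω b for every b
  have hmem0 : ∀ b, (0 : ℂ) ∈ Ω b ∪ Ωt b := by
    intro b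
    rw [hcover b]
    rintro ⟨z, hz, hze⟩
    exact h0 b z hz hze
  have hii : ∀ b, (0 : ℂ) ∈ Ω b := by
    intro b
    rcases hmem0 b with h | h
    · exact h
    · exact absurd (wnd_unique (hfar b 0 h) (hW0 b)) (by norm_num)
  -- points of Ω have winding number 1
  have hΩ1 : ∀ b, ∀ z ∈ Ω b, Wnd (L (z, b)) 1 :=
    fun b z hz => hconstz b (Ω b) (hconn b).isPreconnected
      (fun z' hz' => hcompl b z' (Or.inl hz')) 1 0 (hii b) (hW0 b) z hz
  -- characterizations of the two families
  have hOchar : {p : ℂ × B | p.1 ∈ Ω p.2} = {p | p ∈ U ∧ Wnd (L p) 1} := by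
    ext ⟨z, b⟩
    simp only [Set.mem_setOf_eq]
    constructor
    · intro hz
      exact ⟨hcompl b z (Or.inl hz), hΩ1 b z hz⟩
    · rintro ⟨hU', hw⟩
      have hz : z ∈ Ω b ∪ Ωt b := by
        rw [hcover b]
        exact (hUiff ((z, b) : ℂ × B)).mp hU'
      rcases hz with h | h
      · exact h
      · exact absurd (wnd_unique (hfar b z h) hw) (by norm_num)
  have hOtchar : {p : ℂ × B | p.1 ∈ Ωt p.2} = {p | p ∈ U ∧ Wnd (L p) 0} := by
    ext ⟨z, b⟩
    simp only [Set.mem_setOf_eq]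
    constructor
    · intro hz
      exact ⟨hcompl b z (Or.inr hz), hfar b z hz⟩
    · rintro ⟨hU', hw⟩
      have hz : z ∈ Ω b ∪ Ωt b := by
        rw [hcover b]
        exact (hUiff ((z, b) : ℂ × B)).mp hU'
      rcases hz with h | h
      · exact absurd (wnd_unique (hΩ1 b z h) hw) (by norm_num)
      · exact h
  have hopen_char : ∀ n : ℤ, IsOpen {p : ℂ × B | p ∈ U ∧ Wnd (L p) n} := by
    intro n
    rw [isOpen_iff_forall_mem_open]
    rintro p ⟨hpU, hpw⟩
    obtain ⟨V, hVo, hpV, hVU, htrans⟩ := key p hpU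
    exact ⟨V, fun q hq => ⟨hVU hq, htrans q hq n hpw⟩, hVo, hpV⟩
  exact ⟨hOchar ▸ hopen_char 1, hOtchar ▸ hopen_char 0, hii⟩
end
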